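/- The subspaces V and W of ℝ^E are equal, where W is the span of vectors induced by No-Signalling empirical models and V is the span of the image under L of D±(Ω). -/

import Mathlib

open Finset

noncomputable section

/-- Restriction of a global assignment `ω : X → O` to a context `U`. -/
def restr {X O : Type} (U : Finset X) (ω : X → O) : {x // x ∈ U} → O :=
  fun x => ω x.1

/-- Restriction of a section on `U` along a subset inclusion `V ⊆ U`. -/
def restrSec {X O : Type} {U V : Finset X} (h : V ⊆ U)
    (t : {x // x ∈ U} → O) : {x // x ∈ V} → O :=
  fun x => t ⟨x.1, h x.2⟩

/-- The total weight `e(U)` of a context `U` under the table `e`. -/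
def eCtx {X O : Type} [Fintype X] [DecidableEq X] [Fintype O] [DecidableEq O]
    (𝒰 : Finset (Finset X))
    (e : (U : {U // U ∈ 𝒰}) → ({x // x ∈ U.1} → O) → ℝ)
    (U : {U // U ∈ 𝒰}) : ℝ :=
  ∑ s : {x // x ∈ U.1} → O, e U s

/-- `e` is an empirical model over the cover `𝒰`: it is a nonnegative table of
total mass one, assigning positive weight to every context. -/
def IsEmpirical {X O : Type} [Fintype X] [DecidableEq X] [Fintype O] [DecidableEq O]
    (𝒰 : Finset (Finset X))
    (e : (U : {U // U ∈ 𝒰}) → ({x // x ∈ U.1} → O) → ℝ) : Prop :=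
  (∀ U s, 0 ≤ e U s) ∧
  (∑ U : {U // U ∈ 𝒰}, eCtx 𝒰 e U = 1) ∧
  (∀ U : {U // U ∈ 𝒰}, 0 < eCtx 𝒰 e U)

/-- The conditional probability `e_U(s) = e(U,s)/e(U)`. -/
def eCond {X O : Type} [Fintype X] [DecidableEq X] [Fintype O] [DecidableEq O]
    (𝒰 : Finset (Finset X))
    (e : (U : {U // U ∈ 𝒰}) → ({x // x ∈ U.1} → O) → ℝ)
    (U : {U // U ∈ 𝒰}) (s : {x // x ∈ U.1} → O) : ℝ :=
  e U s / eCtx 𝒰 e U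

/-- The No-Signalling condition: for any two contexts, the two conditional
distributions have the same marginal on the intersection. -/
def NoSignalling {X O : Type} [Fintype X] [DecidableEq X] [Fintype O] [DecidableEq O]
    (𝒰 : Finset (Finset X))
    (e : (U : {U // U ∈ 𝒰}) → ({x // x ∈ U.1} → O) → ℝ) : Prop :=
  ∀ U U' : {U // U ∈ 𝒰}, ∀ s : {x // x ∈ U.1 ∩ U'.1} → O,
    (∑ t : {x // x ∈ U.1} → O,
      if restrSec (V := U.1 ∩ U'.1) (fun _ hx => (Finset.mem_inter.mp hx).1) t = s
        then eCond 𝒰 e U t else 0) =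
    (∑ t' : {x // x ∈ U'.1} → O,
      if restrSec (V := U.1 ∩ U'.1) (fun _ hx => (Finset.mem_inter.mp hx).2) t' = s
        then eCond 𝒰 e U' t' else 0)

/-- Marginal of an schv model on global assignments. -/
def mOmega {X O : Type} [Fintype X] [DecidableEq X] [Fintype O] [DecidableEq O]
    (𝒰 : Finset (Finset X)) (m : (X → O) → {U // U ∈ 𝒰} → ℝ) (ω : X → O) : ℝ :=
  ∑ U : {U // U ∈ 𝒰}, m ω U

/-- Marginal of an schv model on contexts. -/
def mCtx {X O : Type} [Fintype X] [DecidableEq X] [Fintype O] [DecidableEq O]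
    (𝒰 : Finset (Finset X)) (m : (X → O) → {U // U ∈ 𝒰} → ℝ) (U : {U // U ∈ 𝒰}) : ℝ :=
  ∑ ω : X → O, m ω U

/-- `m` is a signed canonical hidden-variable model: a signed measure of total mass one
on `Ω × 𝒰`. -/
def IsSchv {X O : Type} [Fintype X] [DecidableEq X] [Fintype O] [DecidableEq O]
    (𝒰 : Finset (Finset X)) (m : (X → O) → {U // U ∈ 𝒰} → ℝ) : Prop :=
  ∑ ω : X → O, ∑ U : {U // U ∈ 𝒰}, m ω U = 1

/-- Lambda-Independence: `m` factors as the product of its two marginals. -/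
def LambdaIndep {X O : Type} [Fintype X] [DecidableEq X] [Fintype O] [DecidableEq O]
    (𝒰 : Finset (Finset X)) (m : (X → O) → {U // U ∈ 𝒰} → ℝ) : Prop :=
  ∀ ω U, m ω U = mOmega 𝒰 m ω * mCtx 𝒰 m U

/-- The canonical hidden-variable model `m` realizes the empirical table `e`. -/
def Realizes {X O : Type} [Fintype X] [DecidableEq X] [Fintype O] [DecidableEq O]
    (𝒰 : Finset (Finset X)) (m : (X → O) → {U // U ∈ 𝒰} → ℝ)
    (e : (U : {U // U ∈ 𝒰}) → ({x // x ∈ U.1} → O) → ℝ) : Prop :=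
  ∀ (U : {U // U ∈ 𝒰}) (s : {x // x ∈ U.1} → O),
    e U s = ∑ ω : X → O, if restr U.1 ω = s then m ω U else 0

/-- The linear map `L : ℝ^Ω → ℝ^E`. -/
def Lmap {X O : Type} [Fintype X] [DecidableEq X] [Fintype O] [DecidableEq O]
    (𝒰 : Finset (Finset X)) (v : (X → O) → ℝ) :
    (Σ U : {U // U ∈ 𝒰}, ({x // x ∈ U.1} → O)) → ℝ :=
  fun p => ∑ ω : X → O, if restr p.1.1 ω = p.2 then v ω else 0

/-- The vector in `ℝ^E` induced by an empirical table `e`. -/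
def indVec {X O : Type} [Fintype X] [DecidableEq X] [Fintype O] [DecidableEq O]
    (𝒰 : Finset (Finset X))
    (e : (U : {U // U ∈ 𝒰}) → ({x // x ∈ U.1} → O) → ℝ) :
    (Σ U : {U // U ∈ 𝒰}, ({x // x ∈ U.1} → O)) → ℝ :=
  fun p => eCond 𝒰 e p.1 p.2

set_option linter.unusedSectionVars false

section Aux

variable {X O : Type} [Fintype X] [DecidableEq X] [Fintype O] [DecidableEq O]

lemma restrSec_restr {U V : Finset X} (h : V ⊆ U) (ω : X → O) :
    restrSec h (restr U ω) = restr V ω := rfl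

lemma margA {U V : Finset X} (h : V ⊆ U) (d : (X → O) → ℝ) (r : {x // x ∈ V} → O) :
    (∑ t : {x // x ∈ U} → O, if restrSec h t = r then
        (∑ ω : X → O, if restr U ω = t then d ω else 0) else 0)
    = ∑ ω : X → O, if restr V ω = r then d ω else 0 := by
  have h1 : ∀ t : {x // x ∈ U} → O,
      (if restrSec h t = r then (∑ ω : X → O, if restr U ω = t then d ω else 0) else 0)
      = ∑ ω : X → O, if restr U ω = t then (if restrSec h t = r then d ω else 0) else 0 := by
    intro t; split <;> simp
  rw [Finset.sum_congr rfl fun t _ => h1 t, Finset.sum_comm]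
  refine Finset.sum_congr rfl fun ω _ => ?_
  rw [Finset.sum_ite_eq]
  simp [restrSec_restr]
  exact if_congr Iff.rfl rfl rfl

def extZ (o₀ : O) (U₀ : Finset X) (t : {x // x ∈ U₀} → O) : X → O :=
  fun x => if h : x ∈ U₀ then t ⟨x, h⟩ else o₀

lemma restr_extZ (o₀ : O) (U₀ : Finset X) (t : {x // x ∈ U₀} → O) :
    restr U₀ (extZ o₀ U₀ t) = t :=
  funext fun x => dif_pos x.2

lemma realize_of_compatible (o₀ : O) (𝒰 : Finset (Finset X))
    (f : (U : Finset X) → ({x // x ∈ U} → O) → ℝ)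
    (hcomp : ∀ U, U ∈ 𝒰 → ∀ U', U' ∈ 𝒰 → ∀ s : {x // x ∈ U ∩ U'} → O,
      (∑ t : {x // x ∈ U} → O,
        if restrSec (V := U ∩ U') (fun _ hx => (Finset.mem_inter.mp hx).1) t = s
          then f U t else 0) =
      (∑ t' : {x // x ∈ U'} → O,
        if restrSec (V := U ∩ U') (fun _ hx => (Finset.mem_inter.mp hx).2) t' = s
          then f U' t' else 0)) :
    ∃ d : (X → O) → ℝ, ∀ U, U ∈ 𝒰 → ∀ s : {x // x ∈ U} → O,
      f U s = ∑ ω : X → O, if restr U ω = s then d ω else 0 := by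
  classical
  revert hcomp
  induction 𝒰 using Finset.induction_on with
  | empty =>
    intro _
    exact ⟨0, fun U hU => absurd hU (by simp)⟩
  | @insert U₀ 𝒰' hU₀ ih =>
    intro hcomp
    obtain ⟨d', hd'⟩ := ih fun U hU U' hU' s =>
      hcomp U (mem_insert_of_mem hU) U' (mem_insert_of_mem hU') s
    set Q : ({x // x ∈ U₀} → O) → ℝ :=
      fun t => ∑ ω : X → O, if restr U₀ ω = t then d' ω else 0 with hQ
    set δf : ({x // x ∈ U₀} → O) → ℝ := fun t => f U₀ t - Q t with hδf
    set c : (X → O) → ℝ :=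
      fun ω => ∑ t : {x // x ∈ U₀} → O, if ω = extZ o₀ U₀ t then δf t else 0 with hc
    refine ⟨fun ω => d' ω + c ω, ?_⟩
    have hsplit : ∀ (U : Finset X) (s : {x // x ∈ U} → O),
        (∑ ω : X → O, if restr U ω = s then d' ω + c ω else 0)
        = (∑ ω : X → O, if restr U ω = s then d' ω else 0)
          + ∑ t : {x // x ∈ U₀} → O, if restr U (extZ o₀ U₀ t) = s then δf t else 0 := by
      intro U s
      have h1 : (∑ ω : X → O, if restr U ω = s then d' ω + c ω else 0)
          = (∑ ω : X → O, if restr U ω = s then d' ω else 0)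
            + (∑ ω : X → O, if restr U ω = s then c ω else 0) := by
        rw [← Finset.sum_add_distrib]
        exact Finset.sum_congr rfl fun ω _ => by split <;> simp
      rw [h1]; congr 1
      have h2 : ∀ ω : X → O, (if restr U ω = s then c ω else 0)
          = ∑ t : {x // x ∈ U₀} → O,
              if ω = extZ o₀ U₀ t then (if restr U ω = s then δf t else 0) else 0 := by
        intro ω; by_cases h : restr U ω = s <;> simp [hc, h]
      rw [Finset.sum_congr rfl fun ω _ => h2 ω, Finset.sum_comm]
      refine Finset.sum_congr rfl fun t _ => ?_
      have h3 : ∀ ω : X → O, (if ω = extZ o₀ U₀ t then (if restr U ω = s then δf t else 0) else 0)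
          = if ω = extZ o₀ U₀ t then (if restr U (extZ o₀ U₀ t) = s then δf t else 0) else 0 := by
        intro ω; by_cases h : ω = extZ o₀ U₀ t <;> simp [h]
      rw [Finset.sum_congr rfl fun ω _ => h3 ω, Finset.sum_ite_eq']
      simp
    intro U hU s
    rcases Finset.mem_insert.mp hU with rfl | hU'
    · rw [hsplit]
      have h4 : (∑ t : {x // x ∈ U} → O, if restr U (extZ o₀ U t) = s then δf t else 0)
          = δf s := by
        simp only [restr_extZ]
        rw [Finset.sum_ite_eq']; simp
      rw [h4]
      show f U s = Q s + (f U s - Q s)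
      ring
    · rw [hsplit, ← hd' U hU' s]
      have hkey : (∑ t : {x // x ∈ U₀} → O, if restr U (extZ o₀ U₀ t) = s then δf t else 0)
          = 0 := by
        by_cases hz : ∀ x : {x // x ∈ U}, x.1 ∉ U₀ → s x = o₀
        · have hVU : U₀ ∩ U ⊆ U₀ := fun _ hx => (Finset.mem_inter.mp hx).1
          have hVU' : U₀ ∩ U ⊆ U := fun _ hx => (Finset.mem_inter.mp hx).2
          set r : {x // x ∈ U₀ ∩ U} → O := restrSec hVU' s with hr
          have hiff : ∀ t : {x // x ∈ U₀} → O,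
              (restr U (extZ o₀ U₀ t) = s) ↔ (restrSec hVU t = r) := by
            intro t
            constructor
            · intro h; funext x
              obtain ⟨x, hx⟩ := x
              have hx1 := (Finset.mem_inter.mp hx).1
              have hx2 := (Finset.mem_inter.mp hx).2
              have h5 := congrFun h ⟨x, hx2⟩
              simpa [restr, extZ, restrSec, hx1, hr] using h5
            · intro h; funext x
              obtain ⟨x, hx⟩ := x
              by_cases hx0 : x ∈ U₀
              · have h5 := congrFun h ⟨x, Finset.mem_inter.mpr ⟨hx0, hx⟩⟩
                simpa [restr, extZ, restrSec, hx0, hr] using h5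
              · have h5 := hz ⟨x, hx⟩ hx0
                simp [restr, extZ, hx0, h5]
          have e0 : (∑ t : {x // x ∈ U₀} → O, if restr U (extZ o₀ U₀ t) = s then δf t else 0)
              = (∑ t : {x // x ∈ U₀} → O, if restrSec hVU t = r then f U₀ t else 0)
                - (∑ t : {x // x ∈ U₀} → O, if restrSec hVU t = r then Q t else 0) := by
            rw [← Finset.sum_sub_distrib]
            refine Finset.sum_congr rfl fun t _ => ?_
            rw [if_congr (hiff t) rfl rfl]
            split <;> simp [hδf]
          have e1 : (∑ t : {x // x ∈ U₀} → O, if restrSec hVU t = r then f U₀ t else 0)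
              = ∑ ω : X → O, if restr (U₀ ∩ U) ω = r then d' ω else 0 := by
            have := hcomp U₀ (mem_insert_self _ _) U (mem_insert_of_mem hU') r
            rw [this]
            have h6 : ∀ t' : {x // x ∈ U} → O,
                (if restrSec (V := U₀ ∩ U) (fun _ hx => (Finset.mem_inter.mp hx).2) t' = r
                  then f U t' else 0)
                = (if restrSec (V := U₀ ∩ U) (fun _ hx => (Finset.mem_inter.mp hx).2) t' = r
                  then (∑ ω : X → O, if restr U ω = t' then d' ω else 0) else 0) := by
              intro t'; rw [hd' U hU' t']
            rw [Finset.sum_congr rfl fun t' _ => h6 t']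
            exact margA hVU' d' r
          have e2 : (∑ t : {x // x ∈ U₀} → O, if restrSec hVU t = r then Q t else 0)
              = ∑ ω : X → O, if restr (U₀ ∩ U) ω = r then d' ω else 0 := by
            simp only [hQ]
            exact margA hVU d' r
          rw [e0, e1, e2, sub_self]
        · push_neg at hz
          obtain ⟨x, hx0, hxs⟩ := hz
          refine Finset.sum_eq_zero fun t _ => if_neg fun h => ?_
          have h5 := congrFun h x
          apply hxs
          rw [← h5]
          simp [restr, extZ, hx0]
      rw [hkey, add_zero]
end Aux

section Aux2
variable {X O : Type} [Fintype X] [DecidableEq X] [Fintype O] [DecidableEq O]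

lemma Lmap_delta (𝒰 : Finset (Finset X)) (ω : X → O)
    (p : Σ U : {U // U ∈ 𝒰}, ({x // x ∈ U.1} → O)) :
    Lmap 𝒰 (fun ω' => if ω' = ω then (1 : ℝ) else 0) p
      = if restr p.1.1 ω = p.2 then 1 else 0 := by
  unfold Lmap
  have h1 : ∀ ω' : X → O,
      (if restr p.1.1 ω' = p.2 then (if ω' = ω then (1:ℝ) else 0) else 0)
      = if ω' = ω then (if restr p.1.1 ω = p.2 then (1:ℝ) else 0) else 0 := by
    intro ω'
    by_cases h : ω' = ω
    · subst h; simp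
    · simp [h]
  rw [Finset.sum_congr rfl fun ω' _ => h1 ω', Finset.sum_ite_eq']
  simp

lemma Lmap_eq_sum (𝒰 : Finset (Finset X)) (d : (X → O) → ℝ) :
    Lmap 𝒰 d = ∑ ω : X → O, d ω • Lmap 𝒰 (fun ω' => if ω' = ω then 1 else 0) := by
  funext p
  rw [Finset.sum_apply]
  have h1 : ∀ ω : X → O,
      (d ω • Lmap 𝒰 (fun ω' => if ω' = ω then (1:ℝ) else 0)) p
      = if restr p.1.1 ω = p.2 then d ω else 0 := by
    intro ω
    rw [Pi.smul_apply, Lmap_delta, smul_eq_mul]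
    split <;> simp
  rw [Finset.sum_congr rfl fun ω _ => h1 ω]
  rfl

lemma mem_span_L (𝒰 : Finset (Finset X)) (d : (X → O) → ℝ) :
    Lmap 𝒰 d ∈ Submodule.span ℝ
      {w : (Σ U : {U // U ∈ 𝒰}, ({x // x ∈ U.1} → O)) → ℝ |
        ∃ v : (X → O) → ℝ, (∑ ω : X → O, v ω = 1) ∧ w = Lmap 𝒰 v} := by
  rw [Lmap_eq_sum]
  refine Submodule.sum_mem _ fun ω _ => Submodule.smul_mem _ _ (Submodule.subset_span ?_)
  exact ⟨fun ω' => if ω' = ω then 1 else 0, by simp, rfl⟩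

end Aux2

/-- the span `V` of the image under `L` of `D±(Ω)` equals the span `W`
of the vectors induced by No-Signalling empirical models. -/
theorem span_Lmap_eq_span_noSignalling {X : Type} [Fintype X] [DecidableEq X]
    (l : ℕ) (hl : 0 < l) (𝒰 : Finset (Finset X)) :
    Submodule.span ℝ
      {w : (Σ U : {U // U ∈ 𝒰}, ({x // x ∈ U.1} → Fin l)) → ℝ |
        ∃ v : (X → Fin l) → ℝ, (∑ ω : X → Fin l, v ω = 1) ∧ w = Lmap 𝒰 v} =
    Submodule.span ℝ
      {w : (Σ U : {U // U ∈ 𝒰}, ({x // x ∈ U.1} → Fin l)) → ℝ |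
        ∃ e : (U : {U // U ∈ 𝒰}) → ({x // x ∈ U.1} → Fin l) → ℝ,
          IsEmpirical 𝒰 e ∧ NoSignalling 𝒰 e ∧ w = indVec 𝒰 e} := by
  classical
  haveI : NeZero l := ⟨hl.ne'⟩
  by_cases h𝒰 : 𝒰 = ∅
  · subst h𝒰
    haveI hE : IsEmpty (Σ U : {U // U ∈ (∅ : Finset (Finset X))}, ({x // x ∈ U.1} → Fin l)) :=
      ⟨fun p => absurd p.1.2 (Finset.notMem_empty _)⟩
    ext w
    have hw : w = 0 := funext fun p => hE.elim p
    subst hw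
    simp
  · have hne : 𝒰.Nonempty := Finset.nonempty_iff_ne_empty.mpr h𝒰
    have hcard : (0:ℝ) < 𝒰.card := by exact_mod_cast Finset.card_pos.mpr hne
    apply le_antisymm
    · rw [Submodule.span_le]
      rintro w ⟨v, hv1, rfl⟩
      rw [SetLike.mem_coe, Lmap_eq_sum]
      refine Submodule.sum_mem _ fun ω _ => Submodule.smul_mem _ _ (Submodule.subset_span ?_)
      set e₀ : (U : {U // U ∈ 𝒰}) → ({x // x ∈ U.1} → Fin l) → ℝ :=
        fun U s => if restr U.1 ω = s then ((𝒰.card : ℝ))⁻¹ else 0 with he₀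
      have hctx : ∀ U : {U // U ∈ 𝒰}, eCtx 𝒰 e₀ U = (𝒰.card : ℝ)⁻¹ := by
        intro U
        unfold eCtx
        simp only [he₀]
        rw [Finset.sum_ite_eq]
        simp
      have hcond : ∀ (U : {U // U ∈ 𝒰}) (s : {x // x ∈ U.1} → Fin l),
          eCond 𝒰 e₀ U s = if restr U.1 ω = s then 1 else 0 := by
        intro U s
        unfold eCond
        rw [hctx U]
        simp only [he₀]
        split
        · exact div_self (inv_ne_zero hcard.ne')
        · exact zero_div _
      have hside : ∀ (W V : Finset X) (h : V ⊆ W) (s : {x // x ∈ V} → Fin l),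
          (∑ t : {x // x ∈ W} → Fin l,
            if restrSec h t = s then (if restr W ω = t then (1:ℝ) else 0) else 0)
          = if restr V ω = s then 1 else 0 := by
        intro W V h s
        have h1 : ∀ t : {x // x ∈ W} → Fin l,
            (if restrSec h t = s then (if restr W ω = t then (1:ℝ) else 0) else 0)
            = if restr W ω = t then (if restrSec h t = s then (1:ℝ) else 0) else 0 := by
          intro t
          by_cases hA : restrSec h t = s <;> by_cases hB : restr W ω = t <;> simp [hA, hB]
        rw [Finset.sum_congr rfl fun t _ => h1 t, Finset.sum_ite_eq]
        simp only [Finset.mem_univ, if_true, restrSec_restr]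
        exact if_congr Iff.rfl rfl rfl
      refine ⟨e₀, ⟨fun U s => ?_, ?_, fun U => ?_⟩, ?_, ?_⟩
      · simp only [he₀]
        split
        · positivity
        · exact le_rfl
      · rw [Finset.sum_congr rfl fun U _ => hctx U, Finset.sum_const, Finset.card_univ,
          Fintype.card_coe, nsmul_eq_mul, mul_inv_cancel₀ hcard.ne']
      · rw [hctx U]; exact inv_pos.mpr hcard
      · intro U U' s
        simp only [hcond]
        rw [hside U.1 (U.1 ∩ U'.1) (fun _ hx => (Finset.mem_inter.mp hx).1) s,
            hside U'.1 (U.1 ∩ U'.1) (fun _ hx => (Finset.mem_inter.mp hx).2) s]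
      · funext p
        exact (Lmap_delta 𝒰 ω p).trans (hcond p.1 p.2).symm
    · rw [Submodule.span_le]
      rintro w ⟨e, he, hns, rfl⟩
      obtain ⟨d, hd⟩ := realize_of_compatible (⟨0, hl⟩ : Fin l) 𝒰
        (fun U => if h : U ∈ 𝒰 then eCond 𝒰 e ⟨U, h⟩ else 0)
        (by
          intro U hU U' hU' s
          simp only [dif_pos hU, dif_pos hU']
          exact hns ⟨U, hU⟩ ⟨U', hU'⟩ s)
      have hind : indVec 𝒰 e = Lmap 𝒰 d := by
        funext p
        obtain ⟨U, s⟩ := p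
        have h1 := hd U.1 U.2 s
        rw [dif_pos U.2] at h1
        exact h1
      rw [SetLike.mem_coe, hind]
      exact mem_span_L 𝒰 d
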